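/- The Shannon entropy H_n of the shape distribution of a random BST on n nodes satisfies the recurrence H_0 = H_1 = 0 and H_n = lg n + (1/n) · Σ_{i=1}^{n} (H_{i-1} + H_{n-i}) for n ≥ 2, where lg denotes the base-2 logarithm. -/

import Mathlib

open Filter Real

/-- Binary trees: empty (`leaf`) or a node with left and right subtrees. -/
inductive BinTree where
  | leaf : BinTree
  | node : BinTree → BinTree → BinTree
deriving DecidableEq, Repr

namespace BinTree

/-- Number of nodes. -/
def size : BinTree → ℕ
  | leaf => 0
  | node l r => l.size + r.size + 1

/-- Product of subtree sizes over all nodes: `∏_{v∈t} st(v)`. -/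
def stProd : BinTree → ℕ
  | leaf => 1
  | node l r => (node l r).size * l.stProd * r.stProd

/-- Subtree-size entropy: `H_st(t) = ∑_{v∈t} lg st(v)`. -/
noncomputable def stEntropy : BinTree → ℝ
  | leaf => 0
  | node l r => Real.logb 2 ((node l r).size : ℝ) + l.stEntropy + r.stEntropy

/-- Size of the left subtree of the root. -/
def leftSize : BinTree → ℕ
  | leaf => 0
  | node l _ => l.size

/-- Every node has at most one (nonempty) child. -/
def isPath : BinTree → Prop
  | leaf => True
  | node l r => (l = leaf ∨ r = leaf) ∧ l.isPath ∧ r.isPath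

/-- At every node the sizes of the two subtrees differ by at most 1. -/
def isBalanced : BinTree → Prop
  | leaf => True
  | node l r => ((l.size : ℤ) - (r.size : ℤ)).natAbs ≤ 1 ∧ l.isBalanced ∧ r.isBalanced

/-- Number of leaves (nodes with no children). -/
def leafCount : BinTree → ℕ
  | leaf => 0
  | node l r => (if l = leaf ∧ r = leaf then 1 else 0) + l.leafCount + r.leafCount

/-- Number of binary nodes (both children present). -/
def binCount : BinTree → ℕ
  | leaf => 0
  | node l r => (if l ≠ leaf ∧ r ≠ leaf then 1 else 0) + l.binCount + r.binCount

/-- Number of nodes with only a left child. -/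
def leftOnlyCount : BinTree → ℕ
  | leaf => 0
  | node l r => (if l ≠ leaf ∧ r = leaf then 1 else 0) + l.leftOnlyCount + r.leftOnlyCount

/-- Number of nodes with only a right child. -/
def rightOnlyCount : BinTree → ℕ
  | leaf => 0
  | node l r => (if l = leaf ∧ r ≠ leaf then 1 else 0) + l.rightOnlyCount + r.rightOnlyCount

end BinTree

/-- Cartesian tree construction with explicit fuel (fuel ≥ length suffices). -/
def cartesianAux : ℕ → List ℕ → BinTree
  | 0, _ => .leaf
  | _ + 1, [] => .leaf
  | fuel + 1, x :: xs =>
      let m := List.foldl min x xs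
      let i := (x :: xs).idxOf m
      .node (cartesianAux fuel ((x :: xs).take i)) (cartesianAux fuel ((x :: xs).drop (i + 1)))

/-- The Cartesian tree of a list: root at the (first) minimum, left/right
subtrees built recursively from the prefix/suffix. -/
def cartesian (l : List ℕ) : BinTree := cartesianAux l.length l

/-- The array `A[1..n]` (as a list) associated with a permutation of `Fin n`. -/
def permList {n : ℕ} (p : Equiv.Perm (Fin n)) : List ℕ := List.ofFn fun k => (p k : ℕ)

/-- All binary trees with exactly `n` nodes. -/
def treesOfSize : ℕ → Finset BinTree
  | 0 => {BinTree.leaf}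
  | n + 1 =>
    (Finset.range (n + 1)).attach.biUnion fun i =>
      ((treesOfSize i.1) ×ˢ (treesOfSize (n - i.1))).image fun p => BinTree.node p.1 p.2
termination_by n => n
decreasing_by
  · exact Nat.lt_succ_of_le (Nat.le_of_lt_succ (Finset.mem_range.mp i.2))
  · exact Nat.lt_succ_of_le (Nat.sub_le n i.1)

/-- Shannon entropy (base 2) of the random-BST shape distribution on `n` nodes,
which assigns probability `1/stProd t` to each tree `t` on `n` nodes. -/
noncomputable def shapeEntropy (n : ℕ) : ℝ :=
  - ∑ t ∈ treesOfSize n, (1 / (t.stProd : ℝ)) * Real.logb 2 (1 / (t.stProd : ℝ))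

/-- Expectation of `f` under the random-BST shape distribution on `n` nodes. -/
noncomputable def expCount (f : BinTree → ℕ) (n : ℕ) : ℝ :=
  ∑ t ∈ treesOfSize n, (1 / (t.stProd : ℝ)) * (f t : ℝ)

/-- The entropy recurrence: `H 0 = H 1 = 0`, `H n = lg n + (2/n) ∑_{i<n} H i`. -/
noncomputable def Hrec : ℕ → ℝ
  | 0 => 0
  | 1 => 0
  | n + 2 =>
      Real.logb 2 ((n + 2 : ℕ) : ℝ) +
        (2 / ((n + 2 : ℕ) : ℝ)) * ∑ i ∈ (Finset.range (n + 2)).attach, Hrec i.1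
termination_by n => n
decreasing_by exact Finset.mem_range.mp i.2

/-- `rmq_A(i,j)` (1-based): the position of the (first) minimum of `A[i..j]`. -/
def rmqFun (A : List ℕ) (i j : ℕ) : ℕ :=
  let s := (A.drop (i - 1)).take (j - i + 1)
  i + s.idxOf (List.foldl min (s.headD 0) s)

/-- The inorder rank of the LCA of the nodes with inorder ranks `i` and `j`. -/
def lcaInorder : BinTree → ℕ → ℕ → ℕ
  | .leaf, _, _ => 0
  | .node l r, i, j =>
      let m := l.size + 1
      if i < m ∧ j < m then lcaInorder l i j
      else if m < i ∧ m < j then m + lcaInorder r (i - m) (j - m)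
      else m

/-- The subtree rooted at the node reached from the root by the given
left(`false`)/right(`true`) directions, if it exists. -/
def subAt : BinTree → List Bool → Option BinTree
  | t, [] => some t
  | .leaf, _ :: _ => none
  | .node l _, false :: p => subAt l p
  | .node _ r, true :: p => subAt r p

/-- Subtree size of the node at a position (0 if there is no node there). -/
def stAt (t : BinTree) (pos : List Bool) : ℕ := ((subAt t pos).getD .leaf).size

/-- Left-subtree size of the node at a position. -/
def lsAt (t : BinTree) (pos : List Bool) : ℕ := ((subAt t pos).getD .leaf).leftSize

/-- `Pruned μ s`: `μ` is obtained from `s` by replacing some subtrees by `leaf`. -/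
inductive Pruned : BinTree → BinTree → Prop
  | leaf (t) : Pruned .leaf t
  | node {l' r' l r} : Pruned l' l → Pruned r' r → Pruned (.node l' r') (.node l r)

/-- `PrunedN k μ s`: `μ` is obtained from `s` by pruning exactly `k` (nonempty) subtrees. -/
inductive PrunedN : ℕ → BinTree → BinTree → Prop
  | refl (t) : PrunedN 0 t t
  | prune (l r) : PrunedN 1 .leaf (.node l r)
  | node {a b l' r' l r} : PrunedN a l' l → PrunedN b r' r → PrunedN (a + b) (.node l' r') (.node l r)

/-- `IsSubtree s t`: `s` is the subtree of `t` rooted at some node (or `t` itself). -/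
inductive IsSubtree : BinTree → BinTree → Prop
  | refl (t) : IsSubtree t t
  | left {s l r} : IsSubtree s l → IsSubtree s (.node l r)
  | right {s l r} : IsSubtree s r → IsSubtree s (.node l r)

/-- `∑_{v∈μ} lg st_s(v)`: sum over the nodes of `μ` of the log-subtree-sizes
taken in the host tree `s` (for `μ` pruned from `s`). -/
noncomputable def mixedEntropy : BinTree → BinTree → ℝ
  | .leaf, _ => 0
  | .node _ _, .leaf => 0
  | .node l' r', .node l r =>
      Real.logb 2 ((BinTree.node l r).size : ℝ) + mixedEntropy l' l + mixedEntropy r' r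

/-- 1-based preorder index of the node at a position (0 if no node there). -/
def preorderIdx : BinTree → List Bool → ℕ
  | _, [] => 1
  | .leaf, _ :: _ => 0
  | .node l _, false :: p => 1 + preorderIdx l p
  | .node l r, true :: p => 1 + l.size + preorderIdx r p

/-- 1-based inorder index of the node at a position. -/
def inorderIdx : BinTree → List Bool → ℕ
  | t, [] => t.leftSize + 1
  | .leaf, _ :: _ => 0
  | .node l _, false :: p => inorderIdx l p
  | .node l r, true :: p => l.size + 1 + inorderIdx r p

/-- Binary entropy function (base 2). -/
noncomputable def binH (x : ℝ) : ℝ := -x * Real.logb 2 x - (1 - x) * Real.logb 2 (1 - x)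
namespace RBSTAux

lemma stProd_pos (t : BinTree) : 0 < t.stProd := by
  induction t with
  | leaf => simp [BinTree.stProd]
  | node l r ihl ihr =>
    simp only [BinTree.stProd, BinTree.size]
    positivity

lemma size_of_mem : ∀ n t, t ∈ treesOfSize n → t.size = n := by
  intro n
  induction n using Nat.strong_induction_on with
  | _ n ih =>
    match n with
    | 0 =>
      intro t ht
      simp [treesOfSize] at ht
      simp [ht, BinTree.size]
    | n + 1 =>
      intro t ht
      rw [treesOfSize] at ht
      simp only [Finset.mem_biUnion, Finset.mem_image, Finset.mem_product,
        Finset.mem_attach] at ht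
      obtain ⟨⟨i, hi⟩, -, ⟨l, r⟩, ⟨hl, hr⟩, rfl⟩ := ht
      have hi' := Finset.mem_range.mp hi
      have h1 : l.size = i := ih i (Nat.lt_succ_of_le (Nat.le_of_lt_succ hi')) l hl
      have h2 : r.size = n - i := ih (n - i) (Nat.lt_succ_of_le (Nat.sub_le n i)) r hr
      simp [BinTree.size, h1, h2]
      omega

lemma sum_succ (f : BinTree → ℝ) (n : ℕ) :
    ∑ t ∈ treesOfSize (n + 1), f t =
      ∑ i ∈ Finset.range (n + 1), ∑ l ∈ treesOfSize i, ∑ r ∈ treesOfSize (n - i),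
        f (BinTree.node l r) := by
  rw [treesOfSize]
  rw [Finset.sum_biUnion]
  · rw [← Finset.sum_attach (Finset.range (n + 1))
      (fun i => ∑ l ∈ treesOfSize i, ∑ r ∈ treesOfSize (n - i), f (BinTree.node l r))]
    refine Finset.sum_congr rfl fun i _ => ?_
    rw [Finset.sum_image]
    · rw [Finset.sum_product]
    · rintro ⟨a, b⟩ - ⟨c, d⟩ - h
      simpa using h
  · rintro ⟨i, hi⟩ - ⟨j, hj⟩ - hij
    refine Finset.disjoint_left.mpr fun t h1 h2 => ?_
    simp only [Finset.mem_image, Finset.mem_product] at h1 h2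
    obtain ⟨⟨l, r⟩, ⟨hl, -⟩, rfl⟩ := h1
    obtain ⟨⟨l', r'⟩, ⟨hl', -⟩, h⟩ := h2
    injection h with e1 e2
    have e1' : l' = l := e1
    exact hij (Subtype.ext ((size_of_mem i l hl).symm.trans (e1' ▸ size_of_mem j l' hl')))

lemma stProd_node (n : ℕ) {l r : BinTree} (i : ℕ) (hi : i ≤ n)
    (hl : l ∈ treesOfSize i) (hr : r ∈ treesOfSize (n - i)) :
    ((BinTree.node l r).stProd : ℝ) = (n + 1 : ℝ) * l.stProd * r.stProd := by
  have h1 := size_of_mem i l hl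
  have h2 := size_of_mem (n - i) r hr
  have : (BinTree.node l r).size = n + 1 := by simp [BinTree.size, h1, h2]; omega
  simp [BinTree.stProd, this]

lemma sum_prob : ∀ n, ∑ t ∈ treesOfSize n, (1 : ℝ) / t.stProd = 1 := by
  intro n
  induction n using Nat.strong_induction_on with
  | _ n ih =>
    match n with
    | 0 => simp [treesOfSize, BinTree.stProd]
    | n + 1 =>
      rw [sum_succ]
      have key : ∀ i ∈ Finset.range (n + 1),
          ∑ l ∈ treesOfSize i, ∑ r ∈ treesOfSize (n - i),
            (1 : ℝ) / (BinTree.node l r).stProd = 1 / (n + 1 : ℝ) := by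
        intro i hi
        have hi' := Finset.mem_range.mp hi
        have Si := ih i (Nat.lt_succ_of_le (Nat.le_of_lt_succ hi'))
        have Sr := ih (n - i) (Nat.lt_succ_of_le (Nat.sub_le n i))
        calc ∑ l ∈ treesOfSize i, ∑ r ∈ treesOfSize (n - i),
              (1 : ℝ) / (BinTree.node l r).stProd
            = ∑ l ∈ treesOfSize i, ∑ r ∈ treesOfSize (n - i),
              (1 / (n + 1 : ℝ)) * ((1 / (l.stProd : ℝ)) * (1 / (r.stProd : ℝ))) := by
              refine Finset.sum_congr rfl fun l hl => Finset.sum_congr rfl fun r hr => ?_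
              rw [stProd_node n i (Nat.le_of_lt_succ hi') hl hr]
              have hl0 : (0 : ℝ) < l.stProd := by exact_mod_cast stProd_pos l
              have hr0 : (0 : ℝ) < r.stProd := by exact_mod_cast stProd_pos r
              have hn0 : (0 : ℝ) < n + 1 := by positivity
              simp only [one_div, mul_inv]
              ring
          _ = (1 / (n + 1 : ℝ)) * ((∑ l ∈ treesOfSize i, (1 : ℝ) / l.stProd) *
                (∑ r ∈ treesOfSize (n - i), (1 : ℝ) / r.stProd)) := by
              simp only [← Finset.mul_sum]
              rw [← Finset.sum_mul]
          _ = 1 / (n + 1 : ℝ) := by rw [Si, Sr]; ring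
      rw [Finset.sum_congr rfl key, Finset.sum_const, Finset.card_range]
      have : ((n : ℝ) + 1) ≠ 0 := by positivity
      rw [nsmul_eq_mul]
      push_cast
      field_simp

/-- The "positive" form of the entropy. -/
lemma shapeEntropy_eq (n : ℕ) :
    shapeEntropy n = ∑ t ∈ treesOfSize n, (1 / (t.stProd : ℝ)) * Real.logb 2 (t.stProd : ℝ) := by
  rw [shapeEntropy, ← Finset.sum_neg_distrib]
  refine Finset.sum_congr rfl fun t _ => ?_
  rw [one_div, Real.logb_inv]
  ring

lemma shapeEntropy_zero : shapeEntropy 0 = 0 := by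
  simp [shapeEntropy_eq, treesOfSize, BinTree.stProd]

lemma entropy_rec (n : ℕ) :
    shapeEntropy (n + 1) = Real.logb 2 ((n + 1 : ℕ) : ℝ) +
      (1 / ((n + 1 : ℕ) : ℝ)) *
        ∑ i ∈ Finset.range (n + 1), (shapeEntropy i + shapeEntropy (n - i)) := by
  have hn0 : (0 : ℝ) < (n : ℝ) + 1 := by positivity
  rw [shapeEntropy_eq, sum_succ]
  have key : ∀ i ∈ Finset.range (n + 1),
      ∑ l ∈ treesOfSize i, ∑ r ∈ treesOfSize (n - i),
        (1 / ((BinTree.node l r).stProd : ℝ)) * Real.logb 2 ((BinTree.node l r).stProd : ℝ)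
      = (1 / (n + 1 : ℝ)) *
          (Real.logb 2 ((n : ℝ) + 1) + shapeEntropy i + shapeEntropy (n - i)) := by
    intro i hi
    have hi' := Finset.mem_range.mp hi
    calc ∑ l ∈ treesOfSize i, ∑ r ∈ treesOfSize (n - i),
          (1 / ((BinTree.node l r).stProd : ℝ)) * Real.logb 2 ((BinTree.node l r).stProd : ℝ)
        = ∑ l ∈ treesOfSize i, ∑ r ∈ treesOfSize (n - i),
          (1 / (n + 1 : ℝ)) * ((1 / (l.stProd : ℝ)) * (1 / (r.stProd : ℝ)) *
            (Real.logb 2 ((n : ℝ) + 1) + Real.logb 2 (l.stProd : ℝ) +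
              Real.logb 2 (r.stProd : ℝ))) := by
          refine Finset.sum_congr rfl fun l hl => Finset.sum_congr rfl fun r hr => ?_
          rw [stProd_node n i (Nat.le_of_lt_succ hi') hl hr]
          have hl0 : (0 : ℝ) < l.stProd := by exact_mod_cast stProd_pos l
          have hr0 : (0 : ℝ) < r.stProd := by exact_mod_cast stProd_pos r
          rw [Real.logb_mul (by positivity) (by positivity),
            Real.logb_mul (by positivity) (by positivity)]
          simp only [one_div, mul_inv]
          ring
      _ = (1 / (n + 1 : ℝ)) *
            (Real.logb 2 ((n : ℝ) + 1) + shapeEntropy i + shapeEntropy (n - i)) := by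
          simp only [← Finset.mul_sum]
          congr 1
          have expand : ∀ l ∈ treesOfSize i, ∀ r ∈ treesOfSize (n - i),
              (1 / (l.stProd : ℝ)) * (1 / (r.stProd : ℝ)) *
                (Real.logb 2 ((n : ℝ) + 1) + Real.logb 2 (l.stProd : ℝ) +
                  Real.logb 2 (r.stProd : ℝ))
              = Real.logb 2 ((n : ℝ) + 1) * ((1 / (l.stProd : ℝ)) * (1 / (r.stProd : ℝ)))
                + ((1 / (l.stProd : ℝ)) * Real.logb 2 (l.stProd : ℝ)) * (1 / (r.stProd : ℝ))
                + (1 / (l.stProd : ℝ)) * ((1 / (r.stProd : ℝ)) * Real.logb 2 (r.stProd : ℝ)) := by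
            intro l _ r _; ring
          rw [Finset.sum_congr rfl fun l hl => Finset.sum_congr rfl (expand l hl)]
          simp only [Finset.sum_add_distrib]
          have hA : (∑ l ∈ treesOfSize i, ∑ r ∈ treesOfSize (n - i),
              Real.logb 2 ((n : ℝ) + 1) * ((1 / (l.stProd : ℝ)) * (1 / (r.stProd : ℝ))))
              = Real.logb 2 ((n : ℝ) + 1) := by
            simp only [← Finset.mul_sum]
            rw [← Finset.sum_mul, sum_prob i, sum_prob (n - i)]
            ring
          have hB : (∑ l ∈ treesOfSize i, ∑ r ∈ treesOfSize (n - i),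
              ((1 / (l.stProd : ℝ)) * Real.logb 2 (l.stProd : ℝ)) * (1 / (r.stProd : ℝ)))
              = shapeEntropy i := by
            rw [← Finset.sum_mul_sum, sum_prob (n - i), mul_one, ← shapeEntropy_eq i]
          have hC : (∑ l ∈ treesOfSize i, ∑ r ∈ treesOfSize (n - i),
              (1 / (l.stProd : ℝ)) * ((1 / (r.stProd : ℝ)) * Real.logb 2 (r.stProd : ℝ)))
              = shapeEntropy (n - i) := by
            rw [← Finset.sum_mul_sum, sum_prob i, one_mul, ← shapeEntropy_eq (n - i)]
          rw [hA, hB, hC]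
  rw [Finset.sum_congr rfl key, ← Finset.mul_sum]
  simp only [Finset.sum_add_distrib]
  rw [Finset.sum_const, Finset.card_range, nsmul_eq_mul]
  push_cast
  have hne : ((n : ℝ) + 1) ≠ 0 := by positivity
  field_simp
  ring

end RBSTAux

/-- The Shannon entropy `H_n` of the random-BST shape distribution satisfies
`H_0 = H_1 = 0` and `H_n = lg n + (1/n) ∑_{i=1}^n (H_{i-1} + H_{n-i})` for `n ≥ 2`. -/
theorem stmt2 :
    shapeEntropy 0 = 0 ∧ shapeEntropy 1 = 0 ∧
    ∀ n : ℕ, 2 ≤ n →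
      shapeEntropy n = Real.logb 2 (n : ℝ) +
        (1 / (n : ℝ)) * ∑ i ∈ Finset.Icc 1 n, (shapeEntropy (i - 1) + shapeEntropy (n - i)) := by
  refine ⟨RBSTAux.shapeEntropy_zero, ?_, ?_⟩
  · have h := RBSTAux.entropy_rec 0
    simpa [RBSTAux.shapeEntropy_zero] using h
  · intro n hn
    obtain ⟨m, rfl⟩ : ∃ m, n = m + 1 := ⟨n - 1, by omega⟩
    rw [RBSTAux.entropy_rec m]
    congr 2
    refine Finset.sum_nbij' (fun i => i + 1) (fun j => j - 1) ?_ ?_ ?_ ?_ ?_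
    all_goals intro a ha
    · simp only [Finset.mem_range] at ha; simp only [Finset.mem_Icc]; omega
    · simp only [Finset.mem_Icc] at ha; simp only [Finset.mem_range]; omega
    · show a + 1 - 1 = a
      omega
    · show a - 1 + 1 = a
      simp only [Finset.mem_Icc] at ha; omega
    · show shapeEntropy a + shapeEntropy (m - a)
        = shapeEntropy (a + 1 - 1) + shapeEntropy (m + 1 - (a + 1))
      have h1 : a + 1 - 1 = a := by omega
      have h2 : m + 1 - (a + 1) = m - a := by omega
      rw [h1, h2]
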